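/- arXiv:1612.00503 — 3 statements merged into one kernel-verified Lean document; each statement's English description precedes it below -/
import Mathlib

section
/- Let Z be a G×B matrix with entries in {-1,1} such that every row sums to 0 and every column sums to 0. Then it is impossible that both all pairs of distinct columns are orthogonal and all pairs of distinct rows are orthogonal. -/
open Finset

theorem no_doubly_orthogonal_balanced_design
    {G B : ℕ} (hG : 0 < G) (hB : 0 < B)
    (Z : Matrix (Fin G) (Fin B) ℤ)
    (hpm : ∀ g b, Z g b = 1 ∨ Z g b = -1)
    (hrow : ∀ g, ∑ b, Z g b = 0)
    (hcol : ∀ b, ∑ g, Z g b = 0) :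
    ¬ ((∀ b b' : Fin B, b ≠ b' → ∑ g, Z g b * Z g b' = 0) ∧
       (∀ g g' : Fin G, g ≠ g' → ∑ b, Z g b * Z g' b = 0)) := by
  rintro ⟨hcols, -⟩
  set b0 : Fin B := ⟨0, hB⟩ with hb0
  have h1 : ∑ g, Z g b0 * (∑ b, Z g b) = 0 := by
    simp [hrow]
  have h2 : ∑ g, Z g b0 * (∑ b, Z g b) = ∑ b, ∑ g, Z g b0 * Z g b := by
    simp_rw [Finset.mul_sum]
    exact Finset.sum_comm
  have h3 : ∑ b, ∑ g, Z g b0 * Z g b = (G : ℤ) := by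
    rw [Finset.sum_eq_single b0]
    · have hsq : ∀ g, Z g b0 * Z g b0 = 1 := fun g => by
        rcases hpm g b0 with h | h <;> simp [h]
      simp [hsq]
    · intro b _ hb
      exact hcols b0 b (Ne.symm hb)
    · simp
  have : (G : ℤ) = 0 := by rw [← h3, ← h2, h1]
  exact absurd (by exact_mod_cast this) hG.ne'
end

section
/- Suppose X is a G×B matrix over {-1,1} that is balanced (all row and column sums zero) and collision-free (no two rows equal or opposite, no two columns equal or opposite). Let r₁, r₂ be two distinct rows of X, c₁, c₂ two distinct columns of X, and z ∈ {-1,1}. Then the (G+4)×(B+4) matrix X* formed with blocks [X, c₁, -c₁, c₂, -c₂; r₁, z, z, -z, -z; -r₁, z, z, -z, -z; r₂, -z, -z, z, z; -r₂, -z, -z, z, z] is balanced and collision-free. -/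
open Finset

def Collides {k : ℕ} (v w : Fin k → ℤ) : Prop := v = w ∨ v = -w

def DesignBalanced {G B : ℕ} (M : Matrix (Fin G) (Fin B) ℤ) : Prop :=
  (∀ g, ∑ b, M g b = 0) ∧ (∀ b, ∑ g, M g b = 0)

def CollisionFree {G B : ℕ} (M : Matrix (Fin G) (Fin B) ℤ) : Prop :=
  (∀ g g', g ≠ g' → ¬ Collides (M g) (M g')) ∧
  (∀ b b', b ≠ b' → ¬ Collides (fun g => M g b) (fun g => M g b'))

/-- The extended matrix
`[X, c₁, -c₁, c₂, -c₂; r₁, z, z, -z, -z; -r₁, z, z, -z, -z; r₂, -z, -z, z, z; -r₂, -z, -z, z, z]`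
built from rows `g₁, g₂`, columns `b₁, b₂` of `X` and a sign `z`. -/
def extendDesign {G B : ℕ} (X : Matrix (Fin G) (Fin B) ℤ)
    (g₁ g₂ : Fin G) (b₁ b₂ : Fin B) (z : ℤ) :
    Matrix (Fin (G + 4)) (Fin (B + 4)) ℤ := fun i j =>
  if hi : (i : ℕ) < G then
    if hj : (j : ℕ) < B then
      X ⟨i, hi⟩ ⟨j, hj⟩
    else
      (if ((j : ℕ) - B) % 2 = 0 then 1 else -1) *
        (if (j : ℕ) - B < 2 then X ⟨i, hi⟩ b₁ else X ⟨i, hi⟩ b₂)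
  else
    if hj : (j : ℕ) < B then
      (if ((i : ℕ) - G) % 2 = 0 then 1 else -1) *
        (if (i : ℕ) - G < 2 then X g₁ ⟨j, hj⟩ else X g₂ ⟨j, hj⟩)
    else
      (if (i : ℕ) - G < 2 then z else -z) *
        (if (j : ℕ) - B < 2 then 1 else -1)

lemma sum_split4 {n : ℕ} (f : Fin (n+4) → ℤ) :
    ∑ j, f j = (∑ j : Fin n, f ⟨j.1, by omega⟩)
      + f ⟨n, by omega⟩ + f ⟨n+1, by omega⟩ + f ⟨n+2, by omega⟩ + f ⟨n+3, by omega⟩ := by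
  rw [Fin.sum_univ_castSucc, Fin.sum_univ_castSucc, Fin.sum_univ_castSucc, Fin.sum_univ_castSucc]
  rfl

open Matrix

lemma collides_symm {k : ℕ} {v w : Fin k → ℤ} (h : Collides v w) : Collides w v := by
  rcases h with h | h
  · exact Or.inl h.symm
  · exact Or.inr (by rw [h]; funext l; simp)

lemma collide_helper {k : ℕ} (u v : Fin k → ℤ) (σ τ : ℤ)
    (hσ : σ = 1 ∨ σ = -1) (hτ : τ = 1 ∨ τ = -1)
    (h : ∀ l, σ * u l = τ * v l) : Collides u v := by
  rcases hσ with rfl | rfl <;> rcases hτ with rfl | rfl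
  · exact Or.inl (funext fun l => by have := h l; simpa using this)
  · exact Or.inr (funext fun l => by have := h l; simp only [Pi.neg_apply]; linarith)
  · exact Or.inr (funext fun l => by have := h l; simp only [Pi.neg_apply]; linarith)
  · exact Or.inl (funext fun l => by have := h l; simpa using this)

section
variable {G B : ℕ} (X : Matrix (Fin G) (Fin B) ℤ) (g₁ g₂ : Fin G) (b₁ b₂ : Fin B) (z : ℤ)

lemma ed_oo {i : Fin (G+4)} {j : Fin (B+4)} (hi : (i:ℕ) < G) (hj : (j:ℕ) < B) :
    extendDesign X g₁ g₂ b₁ b₂ z i j = X ⟨i, hi⟩ ⟨j, hj⟩ := by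
  simp only [extendDesign]; rw [dif_pos hi, dif_pos hj]

lemma ed_on {i : Fin (G+4)} {j : Fin (B+4)} (hi : (i:ℕ) < G) {t : ℕ} (hj : (j:ℕ) = B + t) :
    extendDesign X g₁ g₂ b₁ b₂ z i j =
      (if t % 2 = 0 then 1 else -1) *
        (if t < 2 then X ⟨i, hi⟩ b₁ else X ⟨i, hi⟩ b₂) := by
  simp only [extendDesign]; rw [dif_pos hi, dif_neg (by omega), hj]
  simp [Nat.add_sub_cancel_left]

lemma ed_no {i : Fin (G+4)} {j : Fin (B+4)} {s : ℕ} (hi : (i:ℕ) = G + s) (hj : (j:ℕ) < B) :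
    extendDesign X g₁ g₂ b₁ b₂ z i j =
      (if s % 2 = 0 then 1 else -1) *
        (if s < 2 then X g₁ ⟨j, hj⟩ else X g₂ ⟨j, hj⟩) := by
  simp only [extendDesign]; rw [dif_neg (by omega), dif_pos hj, hi]
  simp [Nat.add_sub_cancel_left]

lemma ed_nn {i : Fin (G+4)} {j : Fin (B+4)} {s t : ℕ}
    (hi : (i:ℕ) = G + s) (hj : (j:ℕ) = B + t) :
    extendDesign X g₁ g₂ b₁ b₂ z i j =
      (if s < 2 then z else -z) * (if t < 2 then 1 else -1) := by
  simp only [extendDesign]; rw [dif_neg (by omega), dif_neg (by omega), hi, hj]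
  simp [Nat.add_sub_cancel_left]

lemma ed_transpose :
    (extendDesign X g₁ g₂ b₁ b₂ z)ᵀ = extendDesign Xᵀ b₁ b₂ g₁ g₂ z := by
  funext j i
  by_cases hi : (i:ℕ) < G <;> by_cases hj : (j:ℕ) < B <;>
    simp only [Matrix.transpose_apply, extendDesign, hi, hj, dif_pos, dif_neg,
      not_false_iff, dite_true, dite_false] <;>
    first
    | rfl
    | (split_ifs <;> ring)

lemma ed_rowSum (hbal : ∀ g, ∑ b, X g b = 0) :
    ∀ i, ∑ j, extendDesign X g₁ g₂ b₁ b₂ z i j = 0 := by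
  intro i
  rw [sum_split4]
  rcases lt_or_ge (i:ℕ) G with hi | hi
  · have h0 : (∑ j : Fin B, extendDesign X g₁ g₂ b₁ b₂ z i ⟨j.1, by omega⟩)
        = ∑ j, X ⟨i, hi⟩ j := by
      refine Finset.sum_congr rfl fun j _ => ?_
      exact ed_oo X g₁ g₂ b₁ b₂ z hi j.2
    have h1 := ed_on X g₁ g₂ b₁ b₂ z (j := ⟨B, by omega⟩) hi (t := 0) rfl
    have h2 := ed_on X g₁ g₂ b₁ b₂ z (j := ⟨B+1, by omega⟩) hi (t := 1) rfl
    have h3 := ed_on X g₁ g₂ b₁ b₂ z (j := ⟨B+2, by omega⟩) hi (t := 2) rfl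
    have h4 := ed_on X g₁ g₂ b₁ b₂ z (j := ⟨B+3, by omega⟩) hi (t := 3) rfl
    norm_num at h1 h2 h3 h4
    rw [h0, hbal, h1, h2, h3, h4]
    ring
  · have hieq : (i:ℕ) = G + ((i:ℕ) - G) := by omega
    have h0 : (∑ j : Fin B, extendDesign X g₁ g₂ b₁ b₂ z i ⟨j.1, by omega⟩)
        = ∑ j, ((if ((i:ℕ)-G) % 2 = 0 then 1 else -1) *
            (if (i:ℕ)-G < 2 then X g₁ j else X g₂ j) : ℤ) := by
      refine Finset.sum_congr rfl fun j _ => ?_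
      exact ed_no X g₁ g₂ b₁ b₂ z hieq j.2
    have n0 := ed_nn X g₁ g₂ b₁ b₂ z (j := ⟨B, by omega⟩) hieq (t := 0) rfl
    have n1 := ed_nn X g₁ g₂ b₁ b₂ z (j := ⟨B+1, by omega⟩) hieq (t := 1) rfl
    have n2 := ed_nn X g₁ g₂ b₁ b₂ z (j := ⟨B+2, by omega⟩) hieq (t := 2) rfl
    have n3 := ed_nn X g₁ g₂ b₁ b₂ z (j := ⟨B+3, by omega⟩) hieq (t := 3) rfl
    norm_num at n0 n1 n2 n3
    rw [h0, n0, n1, n2, n3]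
    have hsum : ∑ j, ((if ((i:ℕ)-G) % 2 = 0 then 1 else -1) *
        (if (i:ℕ)-G < 2 then X g₁ j else X g₂ j) : ℤ) = 0 := by
      rw [← Finset.mul_sum]
      by_cases h2 : (i:ℕ) - G < 2 <;> simp [h2, hbal]
    rw [hsum]
    ring
end

section
variable {G B : ℕ} (X : Matrix (Fin G) (Fin B) ℤ) (g₁ g₂ : Fin G) (b₁ b₂ : Fin B) (z : ℤ)

lemma ed_cf_oo (hcfr : ∀ g g', g ≠ g' → ¬ Collides (X g) (X g'))
    {i i' : Fin (G+4)} (hi : (i:ℕ) < G) (hi' : (i':ℕ) < G) (hne : i ≠ i') :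
    ¬ Collides (extendDesign X g₁ g₂ b₁ b₂ z i) (extendDesign X g₁ g₂ b₁ b₂ z i') := by
  intro hcol
  have hvne : (i:ℕ) ≠ (i':ℕ) := fun h => hne (Fin.ext h)
  refine hcfr ⟨i, hi⟩ ⟨i', hi'⟩ (fun h => hvne (by simpa using h)) ?_
  rcases hcol with h | h
  · refine Or.inl (funext fun l => ?_)
    have a := congrFun h ⟨l.1, by omega⟩
    rw [ed_oo X g₁ g₂ b₁ b₂ z hi l.2, ed_oo X g₁ g₂ b₁ b₂ z hi' l.2] at a
    exact a
  · refine Or.inr (funext fun l => ?_)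
    have a := congrFun h ⟨l.1, by omega⟩
    rw [Pi.neg_apply, ed_oo X g₁ g₂ b₁ b₂ z hi l.2, ed_oo X g₁ g₂ b₁ b₂ z hi' l.2] at a
    exact a

lemma ed_cf_on (hpm : ∀ g b, X g b = 1 ∨ X g b = -1) (hz : z = 1 ∨ z = -1)
    {i i' : Fin (G+4)} (hi : (i:ℕ) < G) (hi' : G ≤ (i':ℕ)) :
    ¬ Collides (extendDesign X g₁ g₂ b₁ b₂ z i) (extendDesign X g₁ g₂ b₁ b₂ z i') := by
  intro hcol
  have hxx : X ⟨i, hi⟩ b₁ ≠ - X ⟨i, hi⟩ b₁ := by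
    rcases hpm ⟨i, hi⟩ b₁ with h | h <;> rw [h] <;> norm_num
  have hi'eq : (i':ℕ) = G + ((i':ℕ) - G) := by omega
  obtain ⟨jB, hjB⟩ : ∃ j : Fin (B+4), (j:ℕ) = B + 0 := ⟨⟨B, by omega⟩, rfl⟩
  obtain ⟨jB1, hjB1⟩ : ∃ j : Fin (B+4), (j:ℕ) = B + 1 := ⟨⟨B+1, by omega⟩, rfl⟩
  have e0 : extendDesign X g₁ g₂ b₁ b₂ z i jB = X ⟨i, hi⟩ b₁ := by
    rw [ed_on X g₁ g₂ b₁ b₂ z hi hjB]; norm_num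
  have e1 : extendDesign X g₁ g₂ b₁ b₂ z i jB1 = - X ⟨i, hi⟩ b₁ := by
    rw [ed_on X g₁ g₂ b₁ b₂ z hi hjB1]; norm_num
  have f0 : extendDesign X g₁ g₂ b₁ b₂ z i' jB = (if (i':ℕ) - G < 2 then z else -z) := by
    rw [ed_nn X g₁ g₂ b₁ b₂ z hi'eq hjB]; norm_num
  have f1 : extendDesign X g₁ g₂ b₁ b₂ z i' jB1 = (if (i':ℕ) - G < 2 then z else -z) := by
    rw [ed_nn X g₁ g₂ b₁ b₂ z hi'eq hjB1]; norm_num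
  rcases hcol with h | h
  · have a0 := congrFun h jB
    have a1 := congrFun h jB1
    rw [e0, f0] at a0
    rw [e1, f1] at a1
    exact hxx (a0.trans a1.symm)
  · have a0 := congrFun h jB
    have a1 := congrFun h jB1
    rw [Pi.neg_apply] at a0 a1
    rw [e0, f0] at a0
    rw [e1, f1] at a1
    refine hxx ?_
    linarith

lemma ed_cf_nn (hpm : ∀ g b, X g b = 1 ∨ X g b = -1)
    (hcfr : ∀ g g', g ≠ g' → ¬ Collides (X g) (X g'))
    (hg : g₁ ≠ g₂) (hz : z = 1 ∨ z = -1)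
    {i i' : Fin (G+4)} (hi : G ≤ (i:ℕ)) (hi' : G ≤ (i':ℕ)) (hne : i ≠ i') :
    ¬ Collides (extendDesign X g₁ g₂ b₁ b₂ z i) (extendDesign X g₁ g₂ b₁ b₂ z i') := by
  intro hcol
  have hzz : z ≠ -z := by rcases hz with rfl | rfl <;> norm_num
  have hxx : ∀ (g : Fin G) (b : Fin B), X g b ≠ - X g b := fun g b => by
    rcases hpm g b with h | h <;> rw [h] <;> norm_num
  have hvne : (i:ℕ) ≠ (i':ℕ) := fun h => hne (Fin.ext h)
  have hieq : (i:ℕ) = G + ((i:ℕ) - G) := by omega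
  have hi'eq : (i':ℕ) = G + ((i':ℕ) - G) := by omega
  have hsi : (i:ℕ) - G < 4 := by omega
  have hsi' : (i':ℕ) - G < 4 := by omega
  obtain ⟨jB, hjB⟩ : ∃ j : Fin (B+4), (j:ℕ) = B + 0 := ⟨⟨B, by omega⟩, rfl⟩
  have f0 : extendDesign X g₁ g₂ b₁ b₂ z i jB = (if (i:ℕ) - G < 2 then z else -z) := by
    rw [ed_nn X g₁ g₂ b₁ b₂ z hieq hjB]; norm_num
  have f0' : extendDesign X g₁ g₂ b₁ b₂ z i' jB = (if (i':ℕ) - G < 2 then z else -z) := by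
    rw [ed_nn X g₁ g₂ b₁ b₂ z hi'eq hjB]; norm_num
  obtain ⟨jb, hjb⟩ : ∃ j : Fin (B+4), (j:ℕ) = (b₁:ℕ) := ⟨⟨b₁.1, by omega⟩, rfl⟩
  have hjbB : (jb:ℕ) < B := by have := b₁.2; omega
  have r0 : extendDesign X g₁ g₂ b₁ b₂ z i jb =
      (if ((i:ℕ)-G) % 2 = 0 then 1 else -1) *
        (if (i:ℕ)-G < 2 then X g₁ b₁ else X g₂ b₁) := by
    rw [ed_no X g₁ g₂ b₁ b₂ z hieq hjbB]
    congr 1 <;> split_ifs <;> congr 1 <;> exact Fin.ext hjb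
  have r0' : extendDesign X g₁ g₂ b₁ b₂ z i' jb =
      (if ((i':ℕ)-G) % 2 = 0 then 1 else -1) *
        (if (i':ℕ)-G < 2 then X g₁ b₁ else X g₂ b₁) := by
    rw [ed_no X g₁ g₂ b₁ b₂ z hi'eq hjbB]
    congr 1 <;> split_ifs <;> congr 1 <;> exact Fin.ext hjb
  by_cases h2 : (i:ℕ) - G < 2 <;> by_cases h2' : (i':ℕ) - G < 2
  · -- both < 2 : same row g₁, opposite parities
    rcases hcol with h | h
    · refine hxx g₁ b₁ ?_
      have a := congrFun h jb
      rw [r0, r0', if_pos h2, if_pos h2'] at a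
      by_cases hp : ((i:ℕ)-G) % 2 = 0
      · rw [if_pos hp, if_neg (show ¬ ((i':ℕ)-G) % 2 = 0 by omega)] at a; linarith
      · rw [if_neg hp, if_pos (show ((i':ℕ)-G) % 2 = 0 by omega)] at a; linarith
    · have a := congrFun h jB
      rw [Pi.neg_apply, f0, f0', if_pos h2, if_pos h2'] at a
      exact hzz a
  · -- i side 1, i' side 2
    rcases hcol with h | h
    · have a := congrFun h jB
      rw [f0, f0', if_pos h2, if_neg h2'] at a
      exact hzz a
    · refine hcfr g₁ g₂ hg (collide_helper (X g₁) (X g₂)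
        (if ((i:ℕ)-G) % 2 = 0 then 1 else -1) (-(if ((i':ℕ)-G) % 2 = 0 then 1 else -1))
        (by split_ifs <;> simp) (by split_ifs <;> simp) ?_)
      intro l
      have a := congrFun h ⟨l.1, by omega⟩
      have u : extendDesign X g₁ g₂ b₁ b₂ z i ⟨l.1, by omega⟩ =
          (if ((i:ℕ)-G) % 2 = 0 then 1 else -1) * X g₁ l := by
        rw [ed_no X g₁ g₂ b₁ b₂ z hieq l.2, if_pos h2]
      have u' : extendDesign X g₁ g₂ b₁ b₂ z i' ⟨l.1, by omega⟩ =
          (if ((i':ℕ)-G) % 2 = 0 then 1 else -1) * X g₂ l := by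
        rw [ed_no X g₁ g₂ b₁ b₂ z hi'eq l.2, if_neg h2']
      rw [Pi.neg_apply, u, u'] at a
      rw [neg_mul]
      exact a
  · -- i side 2, i' side 1
    rcases hcol with h | h
    · have a := congrFun h jB
      rw [f0, f0', if_neg h2, if_pos h2'] at a
      exact hzz a.symm
    · refine hcfr g₂ g₁ hg.symm (collide_helper (X g₂) (X g₁)
        (if ((i:ℕ)-G) % 2 = 0 then 1 else -1) (-(if ((i':ℕ)-G) % 2 = 0 then 1 else -1))
        (by split_ifs <;> simp) (by split_ifs <;> simp) ?_)
      intro l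
      have a := congrFun h ⟨l.1, by omega⟩
      have u : extendDesign X g₁ g₂ b₁ b₂ z i ⟨l.1, by omega⟩ =
          (if ((i:ℕ)-G) % 2 = 0 then 1 else -1) * X g₂ l := by
        rw [ed_no X g₁ g₂ b₁ b₂ z hieq l.2, if_neg h2]
      have u' : extendDesign X g₁ g₂ b₁ b₂ z i' ⟨l.1, by omega⟩ =
          (if ((i':ℕ)-G) % 2 = 0 then 1 else -1) * X g₁ l := by
        rw [ed_no X g₁ g₂ b₁ b₂ z hi'eq l.2, if_pos h2']
      rw [Pi.neg_apply, u, u'] at a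
      rw [neg_mul]
      exact a
  · -- both ≥ 2 : same row g₂, opposite parities
    rcases hcol with h | h
    · refine hxx g₂ b₁ ?_
      have a := congrFun h jb
      rw [r0, r0', if_neg h2, if_neg h2'] at a
      by_cases hp : ((i:ℕ)-G) % 2 = 0
      · rw [if_pos hp, if_neg (show ¬ ((i':ℕ)-G) % 2 = 0 by omega)] at a; linarith
      · rw [if_neg hp, if_pos (show ((i':ℕ)-G) % 2 = 0 by omega)] at a; linarith
    · have a := congrFun h jB
      rw [Pi.neg_apply, f0, f0', if_neg h2, if_neg h2'] at a
      refine hzz ?_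
      linarith

lemma ed_rowCF (hpm : ∀ g b, X g b = 1 ∨ X g b = -1)
    (hcfr : ∀ g g', g ≠ g' → ¬ Collides (X g) (X g'))
    (hg : g₁ ≠ g₂) (hz : z = 1 ∨ z = -1) :
    ∀ i i', i ≠ i' →
      ¬ Collides (extendDesign X g₁ g₂ b₁ b₂ z i) (extendDesign X g₁ g₂ b₁ b₂ z i') := by
  intro i i' hne hcol
  rcases lt_or_ge (i:ℕ) G with hi | hi <;> rcases lt_or_ge (i':ℕ) G with hi' | hi'
  · exact ed_cf_oo X g₁ g₂ b₁ b₂ z hcfr hi hi' hne hcol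
  · exact ed_cf_on X g₁ g₂ b₁ b₂ z hpm hz hi hi' hcol
  · exact ed_cf_on X g₁ g₂ b₁ b₂ z hpm hz hi' hi (collides_symm hcol)
  · exact ed_cf_nn X g₁ g₂ b₁ b₂ z hpm hcfr hg hz hi hi' hne hcol

end

theorem extendDesign_balanced_collision_free
    {G B : ℕ} (X : Matrix (Fin G) (Fin B) ℤ)
    (hpm : ∀ g b, X g b = 1 ∨ X g b = -1)
    (hbal : DesignBalanced X) (hcf : CollisionFree X)
    (g₁ g₂ : Fin G) (hg : g₁ ≠ g₂)
    (b₁ b₂ : Fin B) (hb : b₁ ≠ b₂)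
    (z : ℤ) (hz : z = 1 ∨ z = -1) :
    DesignBalanced (extendDesign X g₁ g₂ b₁ b₂ z) ∧
      CollisionFree (extendDesign X g₁ g₂ b₁ b₂ z) := by
  have hT := ed_transpose X g₁ g₂ b₁ b₂ z
  constructor
  · constructor
    · exact ed_rowSum X g₁ g₂ b₁ b₂ z hbal.1
    · intro b
      have h := ed_rowSum Xᵀ b₁ b₂ g₁ g₂ z (fun c => hbal.2 c) b
      rw [← hT] at h
      exact h
  · constructor
    · exact ed_rowCF X g₁ g₂ b₁ b₂ z hpm hcf.1 hg hz
    · intro b b' hbb hcol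
      have hcol' : Collides ((extendDesign X g₁ g₂ b₁ b₂ z)ᵀ b)
          ((extendDesign X g₁ g₂ b₁ b₂ z)ᵀ b') := hcol
      rw [hT] at hcol'
      exact ed_rowCF Xᵀ b₁ b₂ g₁ g₂ z (fun c g => hpm g c)
        (fun c c' hcc hK => hcf.2 c c' hcc hK) hb hz b b' hbb hcol'
end

section
/- If a balanced collision-free matrix over {-1,1} of size G×B exists with G, B even and G, B ≥ 6, then balanced collision-free matrices of size (G+4k)×(B+4k) exist for every natural number k. -/
open Finset Matrix

/-! ### Auxiliary construction -/

def e4 : Fin 4 → ℤ := ![1, -1, 1, -1]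

def R4 : Matrix (Fin 4) (Fin 4) ℤ :=
  !![1,1,-1,-1; -1,1,1,-1; -1,-1,1,1; 1,-1,-1,1]

def con {G B : ℕ} (X : Matrix (Fin G) (Fin B) ℤ) (R : Matrix (Fin 4) (Fin 4) ℤ)
    (g0 : Fin G) (b0 : Fin B) : Matrix (Fin (G + 4)) (Fin (B + 4)) ℤ :=
  fun g => Fin.addCases (motive := fun _ => Fin (B + 4) → ℤ)
    (fun g' => Fin.addCases (fun b' => X g' b') (fun c => e4 c * X g' b0))
    (fun i => Fin.addCases (fun b' => e4 i * X g0 b') (fun c => R i c)) g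

variable {G B : ℕ} {X : Matrix (Fin G) (Fin B) ℤ} {R : Matrix (Fin 4) (Fin 4) ℤ}
  {g0 : Fin G} {b0 : Fin B}

@[simp] lemma con_ll (g' : Fin G) (b' : Fin B) :
    con X R g0 b0 (Fin.castAdd 4 g') (Fin.castAdd 4 b') = X g' b' := by
  simp [con]

@[simp] lemma con_lr (g' : Fin G) (c : Fin 4) :
    con X R g0 b0 (Fin.castAdd 4 g') (Fin.natAdd B c) = e4 c * X g' b0 := by
  simp [con]

@[simp] lemma con_rl (i : Fin 4) (b' : Fin B) :
    con X R g0 b0 (Fin.natAdd G i) (Fin.castAdd 4 b') = e4 i * X g0 b' := by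
  simp [con]

@[simp] lemma con_rr (i : Fin 4) (c : Fin 4) :
    con X R g0 b0 (Fin.natAdd G i) (Fin.natAdd B c) = R i c := by
  simp [con]

lemma fin_split {n m : ℕ} (g : Fin (n + m)) :
    (∃ g', g = Fin.castAdd m g') ∨ ∃ i, g = Fin.natAdd n i := by
  rcases lt_or_ge g.1 n with h | h
  · exact Or.inl ⟨⟨g.1, h⟩, by ext; simp⟩
  · exact Or.inr ⟨⟨g.1 - n, by omega⟩, by ext; simp [Fin.natAdd]; omega⟩

lemma collides_elim {k : ℕ} {v w : Fin k → ℤ} (h : Collides v w) :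
    ∃ σ : ℤ, (σ = 1 ∨ σ = -1) ∧ ∀ b, v b = σ * w b := by
  rcases h with h | h
  · exact ⟨1, Or.inl rfl, fun b => by rw [h]; ring⟩
  · exact ⟨-1, Or.inr rfl, fun b => by rw [h]; simp⟩

lemma collides_of {k : ℕ} (v w : Fin k → ℤ) (σ : ℤ) (hσ : σ = 1 ∨ σ = -1)
    (h : ∀ b, v b = σ * w b) : Collides v w := by
  rcases hσ with rfl | rfl
  · exact Or.inl (funext fun b => by simpa using h b)
  · exact Or.inr (funext fun b => by simpa using h b)

lemma e4_pm (i : Fin 4) : e4 i = 1 ∨ e4 i = -1 := by fin_cases i <;> simp [e4]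

section core

variable (hpm : ∀ g b, X g b = 1 ∨ X g b = -1)
  (hnc : ∀ g g', g ≠ g' → ¬ Collides (X g) (X g'))
  (hR02 : ∀ i, R i 0 = - R i 2)
  (hRd1 : ∀ i j : Fin 4, i ≠ j → e4 i = e4 j → ¬ ∀ c, R i c = R j c)
  (hRd2 : ∀ i j : Fin 4, i ≠ j → e4 i = - e4 j → ¬ ∀ c, R i c = - R j c)

include hpm hnc hR02 in
lemma con_lr_ne (g₁ : Fin G) (i : Fin 4) (σ : ℤ) (hσ : σ = 1 ∨ σ = -1)
    (h : ∀ b, con X R g0 b0 (Fin.castAdd 4 g₁) b = σ * con X R g0 b0 (Fin.natAdd G i) b) :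
    False := by
  have h1 : ∀ b', X g₁ b' = (σ * e4 i) * X g0 b' := fun b' => by
    have := h (Fin.castAdd 4 b'); simpa [mul_assoc] using this
  have ht : σ * e4 i = 1 ∨ σ * e4 i = -1 := by
    rcases hσ with rfl | rfl <;> rcases e4_pm i with h' | h' <;> simp [h']
  rcases ht with ht | ht
  · have hg : g₁ = g0 := by
      by_contra hne
      exact hnc g₁ g0 hne (collides_of _ _ 1 (Or.inl rfl) (fun b' => by rw [h1 b', ht]))
    subst hg
    have h2 := h (Fin.natAdd B (0 : Fin 4))
    have h3 := h (Fin.natAdd B (2 : Fin 4))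
    simp only [con_lr, con_rr] at h2 h3
    have he0 : e4 0 = 1 := by simp [e4]
    have he2 : e4 (2 : Fin 4) = 1 := by simp [e4]
    rw [he0] at h2; rw [he2] at h3
    rcases hσ with rfl | rfl <;> rcases hpm g₁ b0 with hs | hs <;> rw [hs] at h2 h3 <;>
      linarith [hR02 i]
  · have key : ∀ b', X g₁ b' = (-1) * X g0 b' := fun b' => by rw [h1 b', ht]
    by_cases hg : g₁ = g0
    · subst hg
      have := key b0
      rcases hpm g₁ b0 with hs | hs <;> rw [hs] at this <;> linarith
    · exact hnc g₁ g0 hg (collides_of _ _ (-1) (Or.inr rfl) key)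

include hpm hRd1 hRd2 in
lemma con_rr_ne (i j : Fin 4) (hij : i ≠ j) (σ : ℤ) (hσ : σ = 1 ∨ σ = -1)
    (h : ∀ b, con X R g0 b0 (Fin.natAdd G i) b = σ * con X R g0 b0 (Fin.natAdd G j) b) :
    False := by
  have h1 := h (Fin.castAdd 4 b0)
  simp only [con_rl] at h1
  have he : e4 i = σ * e4 j := by
    rcases hpm g0 b0 with hs | hs <;> rw [hs] at h1 <;> nlinarith [h1]
  have h2 : ∀ c, R i c = σ * R j c := fun c => by
    have := h (Fin.natAdd B c); simpa using this
  rcases hσ with rfl | rfl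
  · exact hRd1 i j hij (by simpa using he) (fun c => by simpa using h2 c)
  · exact hRd2 i j hij (by simpa using he) (fun c => by have := h2 c; linarith)

include hpm hnc hR02 hRd1 hRd2 in
lemma con_row_cf :
    ∀ g g', g ≠ g' →
      ¬ Collides (con X R g0 b0 g) (con X R g0 b0 g') := by
  intro g g' hne hcol
  obtain ⟨σ, hσ, h⟩ := collides_elim hcol
  rcases fin_split g with ⟨g₁, rfl⟩ | ⟨i, rfl⟩ <;>
    rcases fin_split g' with ⟨g₂, rfl⟩ | ⟨j, rfl⟩
  · have hg : g₁ ≠ g₂ := fun hh => hne (by rw [hh])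
    exact hnc g₁ g₂ hg (collides_of _ _ σ hσ (fun b' => by
      have := h (Fin.castAdd 4 b'); simpa using this))
  · exact con_lr_ne hpm hnc hR02 g₁ j σ hσ h
  · refine con_lr_ne (g0 := g0) (b0 := b0) hpm hnc hR02 g₂ i σ hσ (fun b => ?_)
    have := h b
    rcases hσ with rfl | rfl <;> linarith
  · have hij : i ≠ j := fun hh => hne (by rw [hh])
    exact con_rr_ne hpm hRd1 hRd2 i j hij σ hσ h

include hpm in
lemma con_pm (hRpm : ∀ i c, R i c = 1 ∨ R i c = -1) :
    ∀ g b, con X R g0 b0 g b = 1 ∨ con X R g0 b0 g b = -1 := by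
  intro g b
  rcases fin_split g with ⟨g₁, rfl⟩ | ⟨i, rfl⟩ <;>
    rcases fin_split b with ⟨b₁, rfl⟩ | ⟨c, rfl⟩ <;> simp only [con_ll, con_lr, con_rl, con_rr]
  · exact hpm g₁ b₁
  · rcases e4_pm c with h | h <;> rcases hpm g₁ b0 with h' | h' <;> rw [h, h'] <;> norm_num
  · rcases e4_pm i with h | h <;> rcases hpm g0 b₁ with h' | h' <;> rw [h, h'] <;> norm_num
  · exact hRpm i c

lemma con_row_sum (hrow : ∀ g, ∑ b, X g b = 0) (hRsum : ∀ i, ∑ c, R i c = 0) :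
    ∀ g, ∑ b, con X R g0 b0 g b = 0 := by
  have he : ∑ c, e4 c = 0 := by decide
  intro g
  rcases fin_split g with ⟨g₁, rfl⟩ | ⟨i, rfl⟩
  · rw [Fin.sum_univ_add]
    simp only [con_ll, con_lr]
    rw [← Finset.sum_mul, he, hrow g₁]
    ring
  · rw [Fin.sum_univ_add]
    simp only [con_rl, con_rr]
    rw [← Finset.mul_sum, hrow g0, hRsum i]
    ring

end core

lemma con_transpose :
    (con X R g0 b0)ᵀ = con Xᵀ Rᵀ b0 g0 := by
  funext b g
  rcases fin_split g with ⟨g₁, rfl⟩ | ⟨i, rfl⟩ <;>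
    rcases fin_split b with ⟨b₁, rfl⟩ | ⟨c, rfl⟩ <;>
    simp [Matrix.transpose_apply]

lemma step {G B : ℕ} (hG : 0 < G) (hB : 0 < B)
    (X : Matrix (Fin G) (Fin B) ℤ)
    (hpm : ∀ g b, X g b = 1 ∨ X g b = -1)
    (hbal : DesignBalanced X) (hcf : CollisionFree X) :
    ∃ Y : Matrix (Fin (G + 4)) (Fin (B + 4)) ℤ,
      (∀ g b, Y g b = 1 ∨ Y g b = -1) ∧ DesignBalanced Y ∧ CollisionFree Y := by
  set g0 : Fin G := ⟨0, hG⟩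
  set b0 : Fin B := ⟨0, hB⟩
  refine ⟨con X R4 g0 b0, ?_, ⟨?_, ?_⟩, ?_, ?_⟩
  · exact con_pm hpm (by intro i c; fin_cases i <;> fin_cases c <;> decide)
  · exact con_row_sum hbal.1 (by decide)
  · -- column sums
    intro b
    have ht := con_transpose (X := X) (R := R4) (g0 := g0) (b0 := b0)
    have := con_row_sum (X := Xᵀ) (R := R4ᵀ) (g0 := b0) (b0 := g0) hbal.2 (by decide) b
    rw [← ht] at this
    simpa [Matrix.transpose_apply] using this
  · exact con_row_cf hpm hcf.1 (by decide) (by intro i j; fin_cases i <;> fin_cases j <;> decide) (by intro i j; fin_cases i <;> fin_cases j <;> decide)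
  · -- column collision-freeness
    intro b b' hne
    have ht := con_transpose (X := X) (R := R4) (g0 := g0) (b0 := b0)
    have hpmT : ∀ b g, Xᵀ b g = 1 ∨ Xᵀ b g = -1 := fun b g => hpm g b
    have hncT : ∀ b b', b ≠ b' → ¬ Collides (Xᵀ b) (Xᵀ b') := fun b b' h => hcf.2 b b' h
    have key := con_row_cf (X := Xᵀ) (R := R4ᵀ) (g0 := b0) (b0 := g0)
      hpmT hncT (by decide) (by intro i j; fin_cases i <;> fin_cases j <;> decide) (by intro i j; fin_cases i <;> fin_cases j <;> decide) b b' hne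
    rw [← ht] at key
    exact key

theorem balanced_collision_free_grows
    {G B : ℕ} (hGeven : Even G) (hBeven : Even B) (hG : 6 ≤ G) (hB : 6 ≤ B)
    (X : Matrix (Fin G) (Fin B) ℤ)
    (hpm : ∀ g b, X g b = 1 ∨ X g b = -1)
    (hbal : DesignBalanced X) (hcf : CollisionFree X) :
    ∀ k : ℕ, ∃ Y : Matrix (Fin (G + 4 * k)) (Fin (B + 4 * k)) ℤ,
      (∀ g b, Y g b = 1 ∨ Y g b = -1) ∧ DesignBalanced Y ∧ CollisionFree Y := by
  intro k
  induction k with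
  | zero => exact ⟨X, hpm, hbal, hcf⟩
  | succ k ih =>
    obtain ⟨Y, hYpm, hYbal, hYcf⟩ := ih
    have hG' : 0 < G + 4 * k := by omega
    have hB' : 0 < B + 4 * k := by omega
    obtain ⟨Z, hZ⟩ := step hG' hB' Y hYpm hYbal hYcf
    exact ⟨Z, hZ⟩
end
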